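/- Let γ ∈ (0,1) and let G⁽¹⁾, G⁽²⁾ ⊆ G_γ be disjoint. Then for every ψ ∈ ℋ(G⁽¹⁾): for every g ∈ G⁽²⁾ the family (U(g−h)·ψ_h)_{h∈G⁽¹⁾} is summable, and Σ_{g∈G⁽²⁾} ρ_g·|(π/ρ_g)·Σ_{h∈G⁽¹⁾} U(g−h)·ψ_h|² ≤ (π·C_U·(𝔖₀(α_U)−1)/(γ·ρ₀))²·‖ψ‖_{G⁽¹⁾}². -/

import Mathlib

noncomputable section

open scoped RealInnerProductSpace BigOperators
open Real

/-- `ℝ^d` with the Euclidean structure. -/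
abbrev V (d : ℕ) : Type := EuclideanSpace ℝ (Fin d)

/-- `Λ` is a full-rank lattice: the set of integer linear combinations of some
basis of `ℝ^d`. -/
def IsLattice {d : ℕ} (Λ : Set (V d)) : Prop :=
  ∃ b : Module.Basis (Fin d) ℝ (V d),
    Λ = {x : V d | ∃ c : Fin d → ℤ, x = ∑ i, (c i : ℝ) • b i}

/-- The vector `ν = (0,…,0,1)`. -/
def nu (d : ℕ) (hd : 0 < d) : V d :=
  EuclideanSpace.single ⟨d - 1, Nat.sub_lt hd Nat.one_pos⟩ (1 : ℝ)

/-- `ρ_g = (k₀+g)·ν`. -/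
def rho {d : ℕ} (k₀ ν g : V d) : ℝ := ⟪k₀ + g, ν⟫

/-- `σ_g = |k₀|² - |k₀+g|²`. -/
def sig {d : ℕ} (k₀ g : V d) : ℝ := ‖k₀‖ ^ 2 - ‖k₀ + g‖ ^ 2

/-- `G_γ = {g ∈ Λ : ρ_g ≥ γ·ρ₀}`. -/
def Gset {d : ℕ} (Λ : Set (V d)) (k₀ ν : V d) (γ : ℝ) : Set (V d) :=
  {g ∈ Λ | γ * ⟪k₀, ν⟫ ≤ rho k₀ ν g}

/-- `G^M = {g ∈ Λ : |g| ≤ M}`. -/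
def GMball {d : ℕ} (Λ : Set (V d)) (M : ℝ) : Set (V d) := {g ∈ Λ | ‖g‖ ≤ M}

/-- `𝔖_m(β) = Σ_{κ∈Λ} |κ|^m·exp(-β·|κ|)`. -/
def Sm {d : ℕ} (Λ : Set (V d)) (m : ℕ) (β : ℝ) : ℝ :=
  ∑' κ : Λ, ‖(κ : V d)‖ ^ m * Real.exp (-β * ‖(κ : V d)‖)

/-- The norm `‖φ‖_G` of `ℋ(G)`. -/
def normOn {d : ℕ} (k₀ ν : V d) (G : Set (V d)) (φ : V d → ℂ) : ℝ :=
  Real.sqrt (∑' g : G, rho k₀ ν (g : V d) * ‖φ (g : V d)‖ ^ 2)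

/-- The exponentially weighted norm `‖φ‖_α`. -/
def normA {d : ℕ} (k₀ ν : V d) (G : Set (V d)) (α : ℝ) (φ : V d → ℂ) : ℝ :=
  Real.sqrt (∑' g : G,
    Real.exp (2 * α * ‖(g : V d)‖) * rho k₀ ν (g : V d) * ‖φ (g : V d)‖ ^ 2)

/-- `φ|_G` is a member of `ℋ(G)`, i.e. `‖φ‖_G² < ∞`. -/
def MemH {d : ℕ} (k₀ ν : V d) (G : Set (V d)) (φ : V d → ℂ) : Prop :=
  Summable fun g : G => rho k₀ ν (g : V d) * ‖φ (g : V d)‖ ^ 2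

/-- The DHW equations on the beam set `G`:
`(ρ_g/π)·ψ_g′(z) = i(σ_g ψ_g(z) + Σ_{h∈G} U(g-h) ψ_h(z))` for `g ∈ G`,
including summability of the interaction sum. -/
def SatDHW {d : ℕ} (k₀ ν : V d) (U : V d → ℂ) (G : Set (V d)) (ψ : ℝ → V d → ℂ) : Prop :=
  ∀ z : ℝ, ∀ g ∈ G,
    Summable (fun h : G => U (g - (h : V d)) * ψ z (h : V d)) ∧
    HasDerivAt (fun w => ψ w g)
      (((π / rho k₀ ν g : ℝ) : ℂ) * (Complex.I *
        (((sig k₀ g : ℝ) : ℂ) * ψ z g +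
          ∑' h : G, U (g - (h : V d)) * ψ z (h : V d)))) z

/-- `z ↦ (w(g)·ψ_g(z))_{g∈G}` is a differentiable curve in `ℋ(G)`, encoded by
the weighted embedding `g ↦ w(g)·√ρ_g·ψ_g(z)` into `ℓ²(G)`. -/
def CurveDiff {d : ℕ} (k₀ ν : V d) (G : Set (V d)) (w : V d → ℝ) (ψ : ℝ → V d → ℂ) : Prop :=
  ∃ A : ℝ → lp (fun _ : G => ℂ) 2, Differentiable ℝ A ∧
    ∀ (z : ℝ) (g : G),
      A z g = ((w (g : V d) * Real.sqrt (rho k₀ ν (g : V d)) : ℝ) : ℂ) * ψ z (g : V d)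

/-- Tame strong solution of `DHW_G`. -/
def IsTameSol {d : ℕ} (k₀ ν : V d) (U : V d → ℂ) (G : Set (V d)) (ψ : ℝ → V d → ℂ) : Prop :=
  SatDHW k₀ ν U G ψ ∧ CurveDiff k₀ ν G (fun _ => 1) ψ ∧
  ∀ z : ℝ,
    Summable (fun g : G => |sig k₀ (g : V d)| * ‖ψ z (g : V d)‖ ^ 2) ∧
    Summable (fun q : G × G =>
      ‖U ((q.1 : V d) - (q.2 : V d))‖ * ‖ψ z (q.2 : V d)‖ * ‖ψ z (q.1 : V d)‖)

/-- `α`-tame strong solution of `DHW_G`. -/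
def IsAlphaTameSol {d : ℕ} (k₀ ν : V d) (U : V d → ℂ) (G : Set (V d)) (α : ℝ)
    (ψ : ℝ → V d → ℂ) : Prop :=
  SatDHW k₀ ν U G ψ ∧ CurveDiff k₀ ν G (fun _ => 1) ψ ∧
  CurveDiff k₀ ν G (fun g => Real.exp (α * ‖g‖)) ψ ∧
  ∀ z : ℝ,
    Summable (fun g : G =>
      Real.exp (2 * α * ‖(g : V d)‖) * |sig k₀ (g : V d)| * ‖ψ z (g : V d)‖ ^ 2) ∧
    Summable (fun q : G × G =>
      Real.exp (α * ‖(q.1 : V d)‖ + α * ‖(q.2 : V d)‖) *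
        ‖U ((q.1 : V d) - (q.2 : V d))‖ * ‖ψ z (q.2 : V d)‖ * ‖ψ z (q.1 : V d)‖)

open Classical in
/-- Initial condition `ψ(0) = δ` on `G`. -/
def InitDelta {d : ℕ} (G : Set (V d)) (ψ : ℝ → V d → ℂ) : Prop :=
  ∀ g ∈ G, ψ 0 g = if g = (0 : V d) then 1 else 0

/- ### Auxiliary lemmas -/

lemma IsLattice.zero_mem' {d : ℕ} {Λ : Set (V d)} (h : IsLattice Λ) : (0 : V d) ∈ Λ := by
  obtain ⟨b, rfl⟩ := h
  exact ⟨0, by simp⟩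

lemma IsLattice.sub_mem' {d : ℕ} {Λ : Set (V d)} (h : IsLattice Λ) {x y : V d}
    (hx : x ∈ Λ) (hy : y ∈ Λ) : x - y ∈ Λ := by
  obtain ⟨b, rfl⟩ := h
  obtain ⟨c, rfl⟩ := hx
  obtain ⟨c', rfl⟩ := hy
  refine ⟨c - c', ?_⟩
  rw [← Finset.sum_sub_distrib]
  refine Finset.sum_congr rfl fun i _ => ?_
  rw [← sub_smul]
  congr 1
  push_cast [Pi.sub_apply]
  ring

lemma summable_exp_int (t : ℝ) (ht : 0 < t) :
    Summable fun a : ℤ => Real.exp (-t * |(a : ℝ)|) := by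
  have hg : Summable fun n : ℕ => Real.exp (-t) ^ n :=
    summable_geometric_of_lt_one (Real.exp_nonneg _) (Real.exp_lt_one_iff.mpr (by linarith))
  apply Summable.of_nat_of_neg <;>
  · refine hg.congr fun n => ?_
    rw [← Real.exp_nat_mul]
    push_cast
    simp [abs_of_nonneg, mul_comm]

lemma summable_exp_abs_sum (t : ℝ) (ht : 0 < t) (n : ℕ) :
    Summable fun c : Fin n → ℤ => Real.exp (-t * ∑ i, |(c i : ℝ)|) := by
  induction n with
  | zero => exact Summable.of_finite
  | succ n ih =>
    have hz := summable_exp_int t ht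
    have hmul := hz.mul_of_nonneg ih (fun a => (Real.exp_pos _).le)
      (fun c => (Real.exp_pos _).le)
    rw [← (Fin.consEquiv (fun _ : Fin (n + 1) => ℤ)).summable_iff]
    refine hmul.congr fun p => ?_
    show Real.exp (-t * |(p.1 : ℝ)|) * Real.exp (-t * ∑ i, |(p.2 i : ℝ)|) =
      Real.exp (-t * ∑ i, |((Fin.cons p.1 p.2 : Fin (n+1) → ℤ) i : ℝ)|)
    rw [← Real.exp_add, Fin.sum_univ_succ]
    simp only [Fin.cons_zero, Fin.cons_succ]
    ring_nf

lemma lattice_summable {d : ℕ} {Λ : Set (V d)} (hΛ : IsLattice Λ) {β : ℝ} (hβ : 0 < β) :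
    Summable fun κ : Λ => Real.exp (-β * ‖(κ : V d)‖) := by
  obtain ⟨b, hb⟩ := hΛ
  set e : (Fin d → ℤ) → V d := fun c => ∑ i, (c i : ℝ) • b i with he
  have he' : ∀ c, e c = b.equivFun.symm (fun i => (c i : ℝ)) := fun c => by
    rw [Module.Basis.equivFun_symm_apply]
  have einj : Function.Injective e := by
    intro c c' h
    have h2 : (fun i => (c i : ℝ)) = fun i => (c' i : ℝ) := by
      apply b.equivFun.symm.injective
      rw [← he', ← he', h]
    funext i
    exact_mod_cast congrFun h2 i
  have hrange : Λ = Set.range e := by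
    rw [hb]
    ext x
    simp only [Set.mem_setOf_eq, Set.mem_range]
    exact exists_congr fun c => eq_comm
  set T := LinearMap.toContinuousLinearMap (b.equivFun.toLinearMap) with hT
  set C : ℝ := ‖T‖ + 1 with hC
  have hC0 : 0 < C := by positivity
  have hbound : ∀ x : V d, ‖b.equivFun x‖ ≤ C * ‖x‖ := by
    intro x
    have h1 := T.le_opNorm x
    have h2 : (0:ℝ) ≤ ‖x‖ := norm_nonneg x
    have h3 : T x = b.equivFun x := rfl
    rw [h3] at h1
    nlinarith
  set D : ℝ := d * C + 1 with hD
  have hD0 : 0 < D := by positivity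
  set t : ℝ := β / D with htdef
  have ht : 0 < t := by positivity
  have key : ∀ c : Fin d → ℤ, Real.exp (-β * ‖e c‖) ≤ Real.exp (-t * ∑ i, |(c i : ℝ)|) := by
    intro c
    apply Real.exp_le_exp.mpr
    have hsum : (∑ i, |(c i : ℝ)|) ≤ d * C * ‖e c‖ := by
      have h1 : ∀ i, |(c i : ℝ)| ≤ ‖b.equivFun (e c)‖ := by
        intro i
        have := norm_le_pi_norm (b.equivFun (e c)) i
        have hv : b.equivFun (e c) = fun i => (c i : ℝ) := by
          rw [he' c, LinearEquiv.apply_symm_apply]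
        rw [hv] at this ⊢
        simpa using this
      calc (∑ i, |(c i : ℝ)|) ≤ ∑ _i : Fin d, ‖b.equivFun (e c)‖ :=
            Finset.sum_le_sum fun i _ => h1 i
        _ = d * ‖b.equivFun (e c)‖ := by simp [mul_comm]
        _ ≤ d * (C * ‖e c‖) := by
            apply mul_le_mul_of_nonneg_left (hbound _) (by positivity)
        _ = d * C * ‖e c‖ := by ring
    have hnn : (0:ℝ) ≤ ‖e c‖ := norm_nonneg _
    rw [neg_mul, neg_mul, neg_le_neg_iff]
    rw [htdef, div_mul_eq_mul_div, div_le_iff₀ hD0]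
    calc β * ∑ i, |(c i : ℝ)| ≤ β * (D * ‖e c‖) := by
          apply mul_le_mul_of_nonneg_left _ hβ.le
          calc (∑ i, |(c i : ℝ)|) ≤ d * C * ‖e c‖ := hsum
            _ ≤ D * ‖e c‖ := by nlinarith
      _ = β * ‖e c‖ * D := by ring
  have hq : Summable fun c : Fin d → ℤ => Real.exp (-β * ‖e c‖) :=
    Summable.of_nonneg_of_le (fun c => (Real.exp_pos _).le) key (summable_exp_abs_sum t ht d)
  rw [hrange, ← (Equiv.ofInjective e einj).summable_iff]
  exact hq.congr fun c => rfl

lemma Sm_zero_eq {d : ℕ} (Λ : Set (V d)) (β : ℝ) :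
    Sm Λ 0 β = ∑' κ : Λ, Real.exp (-β * ‖(κ : V d)‖) := by
  unfold Sm
  refine tsum_congr fun κ => ?_
  rw [pow_zero, one_mul]

open Classical in
lemma shift_bound {d : ℕ} {Λ : Set (V d)} (hΛ : IsLattice Λ) {α : ℝ} (hα : 0 < α)
    {A : Set (V d)} (hA : A ⊆ Λ) {x : V d} (hx : x ∈ Λ) (hxA : x ∉ A) :
    Summable (fun a : A => Real.exp (-α * ‖(a : V d) - x‖)) ∧
    ∑' a : A, Real.exp (-α * ‖(a : V d) - x‖) ≤ Sm Λ 0 α - 1 := by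
  have hsum := lattice_summable hΛ hα
  have h0 : (0 : V d) ∈ Λ := hΛ.zero_mem'
  set f : Λ → ℝ := fun κ => Real.exp (-α * ‖(κ : V d)‖) with hf
  set ι : A → Λ := fun a => ⟨(a : V d) - x, hΛ.sub_mem' (hA a.2) hx⟩ with hι
  have hιinj : Function.Injective ι := by
    intro a a' h
    have h2 : (a : V d) - x = (a' : V d) - x := congrArg Subtype.val h
    exact Subtype.ext (by linear_combination (norm := abel) h2)
  have hcomp : (fun a : A => Real.exp (-α * ‖(a : V d) - x‖)) = f ∘ ι := rfl
  have h1 : Summable (fun a : A => Real.exp (-α * ‖(a : V d) - x‖)) := by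
    rw [hcomp]; exact hsum.comp_injective hιinj
  refine ⟨h1, ?_⟩
  set g : Λ → ℝ := fun κ => if κ = (⟨0, h0⟩ : Λ) then 0 else f κ with hg
  have hgle : ∀ κ, g κ ≤ f κ := by
    intro κ
    show (if κ = (⟨0, h0⟩ : Λ) then 0 else f κ) ≤ f κ
    split_ifs with h
    · exact (Real.exp_pos _).le
    · exact le_rfl
  have hgnn : ∀ κ, 0 ≤ g κ := by
    intro κ
    show (0:ℝ) ≤ if κ = (⟨0, h0⟩ : Λ) then 0 else f κ
    split_ifs with h
    · exact le_rfl
    · exact (Real.exp_pos _).le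
  have hgsum : Summable g := Summable.of_nonneg_of_le hgnn hgle hsum
  have hne : ∀ a : A, ι a ≠ (⟨0, h0⟩ : Λ) := by
    intro a h
    have h2 : (a : V d) - x = 0 := congrArg Subtype.val h
    have : (a : V d) = x := by linear_combination (norm := abel) h2
    exact hxA (this ▸ a.2)
  have hle : (∑' a : A, Real.exp (-α * ‖(a : V d) - x‖)) ≤ ∑' κ : Λ, g κ := by
    rw [hcomp]
    refine Summable.tsum_le_tsum_of_inj ι hιinj (fun κ _ => hgnn κ) (fun a => ?_) h1 hgsum
    show f (ι a) ≤ g (ι a)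
    rw [hg]
    simp only [if_neg (hne a)]
    exact le_rfl
  have hsplit : ∑' κ : Λ, f κ = f ⟨0, h0⟩ + ∑' κ : Λ, g κ := Summable.tsum_eq_add_tsum_ite hsum ⟨0, h0⟩
  have hf0 : f ⟨0, h0⟩ = 1 := by simp [hf]
  rw [Sm_zero_eq]
  have : (∑' κ : Λ, f κ) = ∑' κ : Λ, Real.exp (-α * ‖(κ : V d)‖) := rfl
  linarith [hle, hsplit.symm, hf0]

lemma tsum_cauchy_schwarz {ι : Type*} {u v : ι → ℝ} (hu0 : ∀ i, 0 ≤ u i) (hv0 : ∀ i, 0 ≤ v i)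
    (hu : Summable fun i => u i ^ 2) (hv : Summable fun i => v i ^ 2) :
    Summable (fun i => u i * v i) ∧
    (∑' i, u i * v i) ^ 2 ≤ (∑' i, u i ^ 2) * (∑' i, v i ^ 2) := by
  have hsum : Summable fun i => u i * v i := by
    refine Summable.of_nonneg_of_le (fun i => mul_nonneg (hu0 i) (hv0 i))
      (fun i => ?_) ((hu.add hv).mul_left (1 / 2 : ℝ))
    nlinarith [sq_nonneg (u i - v i)]
  refine ⟨hsum, ?_⟩
  have hA : 0 ≤ ∑' i, u i ^ 2 := tsum_nonneg fun i => sq_nonneg _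
  have hB : 0 ≤ ∑' i, v i ^ 2 := tsum_nonneg fun i => sq_nonneg _
  have hR : ∑' i, u i * v i ≤ Real.sqrt ((∑' i, u i ^ 2) * (∑' i, v i ^ 2)) := by
    refine Summable.tsum_le_of_sum_le hsum fun s => ?_
    rw [Real.le_sqrt (Finset.sum_nonneg fun i _ => mul_nonneg (hu0 i) (hv0 i))
      (mul_nonneg hA hB)]
    calc (∑ i ∈ s, u i * v i) ^ 2 ≤ (∑ i ∈ s, u i ^ 2) * ∑ i ∈ s, v i ^ 2 :=
          Finset.sum_mul_sq_le_sq_mul_sq s u v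
      _ ≤ (∑' i, u i ^ 2) * ∑' i, v i ^ 2 := by
          apply mul_le_mul (Summable.sum_le_tsum s (fun i _ => sq_nonneg _) hu)
            (Summable.sum_le_tsum s (fun i _ => sq_nonneg _) hv)
            (Finset.sum_nonneg fun i _ => sq_nonneg _) hA
  calc (∑' i, u i * v i) ^ 2 ≤ Real.sqrt ((∑' i, u i ^ 2) * (∑' i, v i ^ 2)) ^ 2 :=
        pow_le_pow_left₀ (tsum_nonneg fun i => mul_nonneg (hu0 i) (hv0 i)) hR 2
    _ = (∑' i, u i ^ 2) * (∑' i, v i ^ 2) := Real.sq_sqrt (mul_nonneg hA hB)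

set_option maxHeartbeats 1000000 in
/-- bound on the coupling operator between disjoint beam sets:
for disjoint `G⁽¹⁾, G⁽²⁾ ⊆ G_γ` and `ψ ∈ ℋ(G⁽¹⁾)`, the coupling sums are well
defined and
`Σ_{g∈G⁽²⁾} ρ_g·|(π/ρ_g)·Σ_{h∈G⁽¹⁾} U(g-h)ψ_h|²
  ≤ (π·C_U·(𝔖₀(α_U)-1)/(γ·ρ₀))²·‖ψ‖_{G⁽¹⁾}²`. -/
theorem stmt17 {d : ℕ} (hd : 0 < d) (Λ : Set (V d)) (hΛ : IsLattice Λ)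
    (k₀ : V d) (hk : 0 < ⟪k₀, nu d hd⟫)
    (U : V d → ℂ)
    (CU αU : ℝ) (hCU : 0 < CU) (hαU : 0 < αU)
    (hUbd : ∀ g ∈ Λ, ‖U g‖ ≤ CU * Real.exp (-αU * ‖g‖))
    (γ : ℝ) (hγ : γ ∈ Set.Ioo (0 : ℝ) 1)
    (G₁ G₂ : Set (V d))
    (hG₁ : G₁ ⊆ Gset Λ k₀ (nu d hd) γ) (hG₂ : G₂ ⊆ Gset Λ k₀ (nu d hd) γ)
    (hdisj : Disjoint G₁ G₂) :
    ∀ ψ : V d → ℂ,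
      (Summable fun h : G₁ => rho k₀ (nu d hd) (h : V d) * ‖ψ (h : V d)‖ ^ 2) →
      (∀ g : G₂, Summable fun h : G₁ => U ((g : V d) - (h : V d)) * ψ (h : V d)) ∧
      (∑' g : G₂, rho k₀ (nu d hd) (g : V d) *
          ‖((π / rho k₀ (nu d hd) (g : V d) : ℝ) : ℂ) *
            ∑' h : G₁, U ((g : V d) - (h : V d)) * ψ (h : V d)‖ ^ 2) ≤
        (π * CU * (Sm Λ 0 αU - 1) / (γ * ⟪k₀, nu d hd⟫)) ^ 2 *
          ∑' h : G₁, rho k₀ (nu d hd) (h : V d) * ‖ψ (h : V d)‖ ^ 2 := by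
  intro ψ hψ
  obtain ⟨hγ0, hγ1⟩ := hγ
  set ν := nu d hd with hν
  set ρ : V d → ℝ := rho k₀ ν with hρdef
  set c : ℝ := γ * ⟪k₀, ν⟫ with hcdef
  have hc0 : 0 < c := mul_pos hγ0 hk
  have hG₁Λ : G₁ ⊆ Λ := fun x hx => (hG₁ hx).1
  have hG₂Λ : G₂ ⊆ Λ := fun x hx => (hG₂ hx).1
  have hρ1 : ∀ h : G₁, c ≤ ρ (h : V d) := fun h => (hG₁ h.2).2
  have hρ2 : ∀ g : G₂, c ≤ ρ (g : V d) := fun g => (hG₂ g.2).2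
  set N : ℝ := ∑' h : G₁, ρ (h : V d) * ‖ψ (h : V d)‖ ^ 2 with hNdef
  have hterm_nn : ∀ h : G₁, 0 ≤ ρ (h : V d) * ‖ψ (h : V d)‖ ^ 2 :=
    fun h => mul_nonneg (le_trans hc0.le (hρ1 h)) (sq_nonneg _)
  have hN0 : 0 ≤ N := tsum_nonneg hterm_nn
  have hψbd : ∀ h : G₁, ‖ψ (h : V d)‖ ^ 2 ≤ N / c := by
    intro h
    have h1 : ρ (h : V d) * ‖ψ (h : V d)‖ ^ 2 ≤ N := Summable.le_tsum hψ h fun h' _ => hterm_nn h'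
    rw [le_div_iff₀ hc0]
    calc ‖ψ (h : V d)‖ ^ 2 * c = c * ‖ψ (h : V d)‖ ^ 2 := by ring
      _ ≤ ρ (h : V d) * ‖ψ (h : V d)‖ ^ 2 :=
        mul_le_mul_of_nonneg_right (hρ1 h) (sq_nonneg _)
      _ ≤ N := h1
  set Bc : ℝ := Real.sqrt (N / c) with hBc
  have hψle : ∀ h : G₁, ‖ψ (h : V d)‖ ≤ Bc := fun h =>
    (Real.le_sqrt (norm_nonneg _) (div_nonneg hN0 hc0.le)).mpr (hψbd h)
  set S : ℝ := Sm Λ 0 αU with hSdef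
  have hlat := lattice_summable hΛ hαU
  have hS1 : 1 ≤ S := by
    rw [hSdef, Sm_zero_eq]
    have := Summable.le_tsum hlat ⟨0, hΛ.zero_mem'⟩ fun κ _ => (Real.exp_pos _).le
    simpa using this
  set K : ℝ := CU * (S - 1) with hKdef
  have hK0 : 0 ≤ K := mul_nonneg hCU.le (by linarith)
  -- the exponential majorants
  have hg1 : ∀ g : G₂, (g : V d) ∉ G₁ := fun g => Set.disjoint_right.mp hdisj g.2
  have hh2 : ∀ h : G₁, (h : V d) ∉ G₂ := fun h => Set.disjoint_left.mp hdisj h.2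
  have hE : ∀ g : G₂,
      Summable (fun h : G₁ => Real.exp (-αU * ‖(g : V d) - (h : V d)‖)) ∧
      ∑' h : G₁, Real.exp (-αU * ‖(g : V d) - (h : V d)‖) ≤ S - 1 := by
    intro g
    obtain ⟨p1, p2⟩ := shift_bound hΛ hαU hG₁Λ (hG₂Λ g.2) (hg1 g)
    have hcg : (fun h : G₁ => Real.exp (-αU * ‖(g : V d) - (h : V d)‖)) =
        fun h : G₁ => Real.exp (-αU * ‖(h : V d) - (g : V d)‖) := by
      funext h; rw [norm_sub_rev]
    rw [hcg]
    exact ⟨p1, p2⟩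
  have hE' : ∀ h : G₁,
      Summable (fun g : G₂ => Real.exp (-αU * ‖(g : V d) - (h : V d)‖)) ∧
      ∑' g : G₂, Real.exp (-αU * ‖(g : V d) - (h : V d)‖) ≤ S - 1 :=
    fun h => shift_bound hΛ hαU hG₂Λ (hG₁Λ h.2) (hh2 h)
  -- the kernel
  set w : G₂ → G₁ → ℝ := fun g h => ‖U ((g : V d) - (h : V d))‖ with hwdef
  have hw0 : ∀ (g : G₂) (h : G₁), 0 ≤ w g h := fun g h => norm_nonneg _
  have hwle : ∀ (g : G₂) (h : G₁),
      w g h ≤ CU * Real.exp (-αU * ‖(g : V d) - (h : V d)‖) := fun g h =>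
    hUbd _ (hΛ.sub_mem' (hG₂Λ g.2) (hG₁Λ h.2))
  have hs : ∀ g : G₂, Summable fun h : G₁ => w g h := fun g =>
    Summable.of_nonneg_of_le (hw0 g) (hwle g) ((hE g).1.mul_left CU)
  have hsbd : ∀ g : G₂, ∑' h : G₁, w g h ≤ K := by
    intro g
    calc ∑' h : G₁, w g h
        ≤ ∑' h : G₁, CU * Real.exp (-αU * ‖(g : V d) - (h : V d)‖) :=
          Summable.tsum_le_tsum (hwle g) (hs g) ((hE g).1.mul_left CU)
      _ = CU * ∑' h : G₁, Real.exp (-αU * ‖(g : V d) - (h : V d)‖) := tsum_mul_left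
      _ ≤ K := by rw [hKdef]; exact mul_le_mul_of_nonneg_left (hE g).2 hCU.le
  have hs' : ∀ h : G₁, Summable fun g : G₂ => w g h := fun h =>
    Summable.of_nonneg_of_le (fun g => hw0 g h) (fun g => hwle g h) ((hE' h).1.mul_left CU)
  have hsbd' : ∀ h : G₁, ∑' g : G₂, w g h ≤ K := by
    intro h
    calc ∑' g : G₂, w g h
        ≤ ∑' g : G₂, CU * Real.exp (-αU * ‖(g : V d) - (h : V d)‖) :=
          Summable.tsum_le_tsum (fun g => hwle g h) (hs' h) ((hE' h).1.mul_left CU)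
      _ = CU * ∑' g : G₂, Real.exp (-αU * ‖(g : V d) - (h : V d)‖) := tsum_mul_left
      _ ≤ K := by rw [hKdef]; exact mul_le_mul_of_nonneg_left (hE' h).2 hCU.le
  -- summability of the coupling sums
  have hnormsum : ∀ g : G₂, Summable fun h : G₁ => w g h * ‖ψ (h : V d)‖ := by
    intro g
    refine Summable.of_nonneg_of_le (fun h => mul_nonneg (hw0 g h) (norm_nonneg _))
      (fun h => mul_le_mul_of_nonneg_left (hψle h) (hw0 g h)) ((hs g).mul_right Bc)
  have hsum1 : ∀ g : G₂, Summable fun h : G₁ => U ((g : V d) - (h : V d)) * ψ (h : V d) := by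
    intro g
    refine Summable.of_norm ?_
    exact (hnormsum g).congr fun h => (norm_mul _ _).symm
  refine ⟨hsum1, ?_⟩
  -- per-beam quantities
  set t : G₂ → ℝ := fun g => ∑' h : G₁, w g h * ‖ψ (h : V d)‖ ^ 2 with htdef
  set a : G₂ → ℝ := fun g => ∑' h : G₁, w g h * ‖ψ (h : V d)‖ with hadef
  have htsummand : ∀ g : G₂, Summable fun h : G₁ => w g h * ‖ψ (h : V d)‖ ^ 2 := by
    intro g
    refine Summable.of_nonneg_of_le (fun h => mul_nonneg (hw0 g h) (sq_nonneg _))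
      (fun h => mul_le_mul_of_nonneg_left (hψbd h) (hw0 g h)) ((hs g).mul_right (N / c))
  have ht0 : ∀ g : G₂, 0 ≤ t g := fun g =>
    tsum_nonneg fun h => mul_nonneg (hw0 g h) (sq_nonneg _)
  have ha0 : ∀ g : G₂, 0 ≤ a g := fun g =>
    tsum_nonneg fun h => mul_nonneg (hw0 g h) (norm_nonneg _)
  -- Cauchy-Schwarz per beam
  have hCS : ∀ g : G₂, a g ^ 2 ≤ K * t g := by
    intro g
    have hu : Summable fun h : G₁ => Real.sqrt (w g h) ^ 2 :=
      (hs g).congr fun h => (Real.sq_sqrt (hw0 g h)).symm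
    have hv : Summable fun h : G₁ => (Real.sqrt (w g h) * ‖ψ (h : V d)‖) ^ 2 :=
      (htsummand g).congr fun h => by rw [mul_pow, Real.sq_sqrt (hw0 g h)]
    obtain ⟨_, hcs⟩ := tsum_cauchy_schwarz (fun h => Real.sqrt_nonneg (w g h))
      (fun h => mul_nonneg (Real.sqrt_nonneg _) (norm_nonneg _)) hu hv
    have e1 : (∑' h : G₁, Real.sqrt (w g h) * (Real.sqrt (w g h) * ‖ψ (h : V d)‖)) = a g := by
      rw [hadef]
      refine tsum_congr fun h => ?_
      rw [← mul_assoc, Real.mul_self_sqrt (hw0 g h)]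
    have e2 : (∑' h : G₁, Real.sqrt (w g h) ^ 2) = ∑' h : G₁, w g h :=
      tsum_congr fun h => Real.sq_sqrt (hw0 g h)
    have e3 : (∑' h : G₁, (Real.sqrt (w g h) * ‖ψ (h : V d)‖) ^ 2) = t g := by
      rw [htdef]
      refine tsum_congr fun h => ?_
      rw [mul_pow, Real.sq_sqrt (hw0 g h)]
    rw [e1, e2, e3] at hcs
    calc a g ^ 2 ≤ (∑' h : G₁, w g h) * t g := hcs
      _ ≤ K * t g := mul_le_mul_of_nonneg_right (hsbd g) (ht0 g)
  -- termwise bound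
  have hterm : ∀ g : G₂, ρ (g : V d) *
      ‖((π / ρ (g : V d) : ℝ) : ℂ) * ∑' h : G₁, U ((g : V d) - (h : V d)) * ψ (h : V d)‖ ^ 2 ≤
      π ^ 2 * K / c * t g := by
    intro g
    set Sg : ℂ := ∑' h : G₁, U ((g : V d) - (h : V d)) * ψ (h : V d) with hSg
    have hρg : 0 < ρ (g : V d) := lt_of_lt_of_le hc0 (hρ2 g)
    have hSgle : ‖Sg‖ ≤ a g := by
      have h1 : ‖Sg‖ ≤ ∑' h : G₁, ‖U ((g : V d) - (h : V d)) * ψ (h : V d)‖ :=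
        norm_tsum_le_tsum_norm ((hnormsum g).congr fun h => (norm_mul _ _).symm)
      have h2 : (∑' h : G₁, ‖U ((g : V d) - (h : V d)) * ψ (h : V d)‖) = a g :=
        tsum_congr fun h => norm_mul _ _
      rw [h2] at h1
      exact h1
    have hnorm : ‖((π / ρ (g : V d) : ℝ) : ℂ) * Sg‖ = π / ρ (g : V d) * ‖Sg‖ := by
      rw [norm_mul, Complex.norm_real, Real.norm_eq_abs,
        abs_of_pos (div_pos Real.pi_pos hρg)]
    rw [hnorm]
    have e4 : ρ (g : V d) * (π / ρ (g : V d) * ‖Sg‖) ^ 2 =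
        π ^ 2 / ρ (g : V d) * ‖Sg‖ ^ 2 := by
      field_simp
    rw [e4]
    calc π ^ 2 / ρ (g : V d) * ‖Sg‖ ^ 2 ≤ π ^ 2 / c * ‖Sg‖ ^ 2 := by
          apply mul_le_mul_of_nonneg_right _ (sq_nonneg _)
          exact div_le_div_of_nonneg_left (sq_nonneg π) hc0 (hρ2 g)
      _ ≤ π ^ 2 / c * (a g ^ 2) := by
          apply mul_le_mul_of_nonneg_left _ (by positivity)
          exact pow_le_pow_left₀ (norm_nonneg _) hSgle 2
      _ ≤ π ^ 2 / c * (K * t g) := mul_le_mul_of_nonneg_left (hCS g) (by positivity)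
      _ = π ^ 2 * K / c * t g := by ring
  -- double-sum bound : Σ_g t g ≤ K/c * N
  set F : G₁ × G₂ → ℝ := fun q => w q.2 q.1 * ‖ψ (q.1 : V d)‖ ^ 2 with hFdef
  have hF0 : ∀ q : G₁ × G₂, 0 ≤ F q := fun q => mul_nonneg (hw0 q.2 q.1) (sq_nonneg _)
  have hF0' : 0 ≤ F := hF0
  have hFrow : ∀ h : G₁, Summable fun g : G₂ => F (h, g) := fun h =>
    ((hs' h).mul_right (‖ψ (h : V d)‖ ^ 2)).congr fun g => rfl
  have hFrowbd : ∀ h : G₁, (∑' g : G₂, F (h, g)) ≤ K / c * (ρ (h : V d) * ‖ψ (h : V d)‖ ^ 2) := by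
    intro h
    have e5 : (∑' g : G₂, F (h, g)) = (∑' g : G₂, w g h) * ‖ψ (h : V d)‖ ^ 2 := by
      calc (∑' g : G₂, F (h, g)) = ∑' g : G₂, w g h * ‖ψ (h : V d)‖ ^ 2 :=
            tsum_congr fun g => rfl
        _ = (∑' g : G₂, w g h) * ‖ψ (h : V d)‖ ^ 2 := tsum_mul_right
    rw [e5]
    calc (∑' g : G₂, w g h) * ‖ψ (h : V d)‖ ^ 2 ≤ K * ‖ψ (h : V d)‖ ^ 2 :=
          mul_le_mul_of_nonneg_right (hsbd' h) (sq_nonneg _)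
      _ ≤ K / c * (ρ (h : V d) * ‖ψ (h : V d)‖ ^ 2) := by
          rw [div_mul_eq_mul_div, le_div_iff₀ hc0]
          calc K * ‖ψ (h : V d)‖ ^ 2 * c = K * (c * ‖ψ (h : V d)‖ ^ 2) := by ring
            _ ≤ K * (ρ (h : V d) * ‖ψ (h : V d)‖ ^ 2) := by
                apply mul_le_mul_of_nonneg_left _ hK0
                exact mul_le_mul_of_nonneg_right (hρ1 h) (sq_nonneg _)
  have hF : Summable F := by
    rw [summable_prod_of_nonneg hF0']
    exact ⟨hFrow, Summable.of_nonneg_of_le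
      (fun h => tsum_nonneg fun g => hF0 (h, g)) hFrowbd (hψ.mul_left (K / c))⟩
  have hFswap : Summable fun q : G₂ × G₁ => F (q.2, q.1) := by
    have := hF.prod_symm
    exact this.congr fun q => rfl
  have hts : Summable t := by
    have := hFswap.prod
    exact this.congr fun g => rfl
  have htsumbd : (∑' g : G₂, t g) ≤ K / c * N := by
    have e6 : (∑' g : G₂, t g) = ∑' q : G₂ × G₁, F (q.2, q.1) := (Summable.tsum_prod hFswap).symm
    have e7 : (∑' q : G₂ × G₁, F (q.2, q.1)) = ∑' q : G₁ × G₂, F q := by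
      have := Equiv.tsum_eq (Equiv.prodComm ↥G₂ ↥G₁) F
      rw [← this]
      rfl
    have e8 : (∑' q : G₁ × G₂, F q) = ∑' h : G₁, ∑' g : G₂, F (h, g) := Summable.tsum_prod hF
    rw [e6, e7, e8]
    calc (∑' h : G₁, ∑' g : G₂, F (h, g))
        ≤ ∑' h : G₁, K / c * (ρ (h : V d) * ‖ψ (h : V d)‖ ^ 2) :=
          Summable.tsum_le_tsum hFrowbd (hF.prod) (hψ.mul_left (K / c))
      _ = K / c * N := tsum_mul_left
  -- conclusion
  have htermsum : Summable fun g : G₂ => ρ (g : V d) *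
      ‖((π / ρ (g : V d) : ℝ) : ℂ) * ∑' h : G₁, U ((g : V d) - (h : V d)) * ψ (h : V d)‖ ^ 2 := by
    refine Summable.of_nonneg_of_le
      (fun g => mul_nonneg (le_trans hc0.le (hρ2 g)) (sq_nonneg _)) hterm
      (hts.mul_left (π ^ 2 * K / c))
  calc (∑' g : G₂, ρ (g : V d) *
        ‖((π / ρ (g : V d) : ℝ) : ℂ) * ∑' h : G₁, U ((g : V d) - (h : V d)) * ψ (h : V d)‖ ^ 2)
      ≤ ∑' g : G₂, π ^ 2 * K / c * t g :=
        Summable.tsum_le_tsum hterm htermsum (hts.mul_left (π ^ 2 * K / c))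
    _ = π ^ 2 * K / c * ∑' g : G₂, t g := tsum_mul_left
    _ ≤ π ^ 2 * K / c * (K / c * N) :=
        mul_le_mul_of_nonneg_left htsumbd (by positivity)
    _ = (π * CU * (S - 1) / c) ^ 2 * N := by
        rw [hKdef]
        field_simp
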